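/- A partition is uniquely determined by its s-core and its s-quotient; moreover, for any s-core σ and any (ℤ/sℤ)-tuple of partitions υ, there exists a partition with s-core σ and s-quotient υ. -/

import Mathlib

open Classical

/-- A partition: an infinite weakly decreasing sequence of non-negative integers
with finite sum.  Here `f n` denotes the part `λ_{n+1}`. -/
structure SeqPartition where
  f : ℕ → ℕ
  antitone : ∀ ⦃m n : ℕ⦄, m ≤ n → f n ≤ f m
  eventually_zero : ∃ N, ∀ n, N ≤ n → f n = 0

instance : Inhabited SeqPartition :=
  ⟨⟨fun _ => 0, fun _ _ _ => le_rfl, ⟨0, fun _ _ => rfl⟩⟩⟩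

namespace SeqPartition

/-- The beta-set `β_r(λ) = {λ_i - i + r : i ≥ 1}`. -/
def beta (r : ℤ) (l : SeqPartition) : Set ℤ :=
  {x | ∃ n : ℕ, x = (l.f n : ℤ) - (n + 1) + r}

/-- The size `|λ|` of a partition. -/
noncomputable def size (l : SeqPartition) : ℕ := ∑ᶠ n, l.f n

/-- The partition whose beta-set (for some shift `r`) is `B`, if it exists. -/
noncomputable def ofBeta (B : Set ℤ) : SeqPartition :=
  if h : ∃ l : SeqPartition, ∃ r : ℤ, beta r l = B then h.choose else default

/-- The beta-set of the `s`-core: beads pushed up their runners as far as possible.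
A position `x` is occupied iff the number of beads of `B` weakly above it on its runner
exceeds the number of gaps strictly below it on its runner. -/
def coreBeta (s : ℕ) (B : Set ℤ) : Set ℤ :=
  {x | ({y : ℤ | y ∉ B ∧ y ≡ x [ZMOD (s : ℤ)] ∧ y < x}).ncard
      < ({b : ℤ | b ∈ B ∧ b ≡ x [ZMOD (s : ℤ)] ∧ x ≤ b}).ncard}

/-- The `s`-core of a partition. -/
noncomputable def core (s : ℕ) (l : SeqPartition) : SeqPartition :=
  ofBeta (coreBeta s (beta 0 l))

/-- `λ` is an `s`-core. -/
def IsCore (s : ℕ) (l : SeqPartition) : Prop := core s l = l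

/-- The `s`-weight of `λ`. -/
noncomputable def wt (s : ℕ) (l : SeqPartition) : ℕ := (size l - size (core s l)) / s

/-- The component of the `s`-quotient of `λ` indexed by `j : ZMod s`. -/
noncomputable def quot (s : ℕ) (l : SeqPartition) (j : ZMod s) : SeqPartition :=
  ofBeta {z : ℤ | ((j.val : ℤ) + (s : ℤ) * z) ∈ beta 0 l}

/-- The `s`-set entry `Γ_j(λ)`: the smallest integer in the class `j` mod `s`
not lying in the beta-set of the `s`-core of `λ`. -/
noncomputable def sSet (s : ℕ) (l : SeqPartition) (j : ZMod s) : ℤ :=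
  sInf {x : ℤ | (x : ZMod s) = j ∧ x ∉ beta 0 (core s l)}

/-- `λ` is an `[s:t]`-core. -/
def IsGenCore (s t : ℕ) (l : SeqPartition) : Prop :=
  wt s (core t l) = wt s l

/-- The level `t` action of the generator `w_i` of the affine symmetric group `W_s` on `ℤ`. -/
def genActZ (s t : ℕ) (i : ZMod s) (n : ℤ) : ℤ :=
  if (n : ZMod s) = (i - 1) * (t : ZMod s) - ((((s : ℤ) - 1) * ((t : ℤ) - 1) / 2 : ℤ) : ZMod s)
    then n + t
  else if (n : ZMod s) = i * (t : ZMod s) - ((((s : ℤ) - 1) * ((t : ℤ) - 1) / 2 : ℤ) : ZMod s)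
    then n - t
  else n

/-- The level `t` action of the generator `w_i` of `W_s` on partitions, via beta-sets. -/
noncomputable def genAct (s t : ℕ) (i : ZMod s) (l : SeqPartition) : SeqPartition :=
  ofBeta (genActZ s t i '' beta 0 l)

/-- The action of a word in the generators of `W_s`, at level `t`, on partitions. -/
noncomputable def wordAct (s t : ℕ) (w : List (ZMod s)) (l : SeqPartition) : SeqPartition :=
  w.foldr (genAct s t) l

/-- `λ` and `μ` lie in the same orbit for the level `t` action of `W_s`. -/
def SameOrbit (s t : ℕ) (l m : SeqPartition) : Prop :=
  ∃ w : List (ZMod s), wordAct s t w l = m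

/-- `λ` and `μ` lie in the same orbit for the commuting actions of `W_s` (level `t`)
and `W_t` (level `s`). -/
def SameOrbit2 (s t : ℕ) (l m : SeqPartition) : Prop :=
  ∃ a : List (ZMod s), ∃ b : List (ZMod t), wordAct s t a (wordAct t s b l) = m

/-- The `t`-weighted `s`-quotient of `λ`: the multiset of pairs
`(Γ_i(λ) + tℤ, λ^(i))` over `i ∈ ℤ/sℤ`. -/
noncomputable def twq (s t : ℕ) (l : SeqPartition) : Multiset (ZMod t × SeqPartition) :=
  ((List.range s).map (fun i =>
    (((sSet s l (i : ZMod s) : ℤ) : ZMod t), quot s l (i : ZMod s))) : Multiset _)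

/-- The largest `(s,t)`-core `κ_{s,t}`: the partition whose beta-set is the set of
integers not expressible as a non-negative integer combination of `s` and `t`. -/
noncomputable def kappa (s t : ℕ) : SeqPartition :=
  ofBeta {x : ℤ | ¬ ∃ a b : ℕ, x = (a : ℤ) * s + (b : ℤ) * t}

end SeqPartition

namespace CQAux
open SeqPartition

def Adm (B : Set ℤ) : Prop :=
  (∃ a : ℤ, ∀ x : ℤ, x < a → x ∈ B) ∧ (∃ b : ℤ, ∀ x ∈ B, x < b)

noncomputable def seq (r : ℤ) (l : SeqPartition) (n : ℕ) : ℤ := (l.f n : ℤ) - (n + 1) + r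

lemma beta_eq_range (r : ℤ) (l : SeqPartition) : beta r l = Set.range (seq r l) := by
  ext x
  simp only [beta, Set.mem_setOf_eq, Set.mem_range, seq, eq_comm]

lemma seq_strictAnti (r : ℤ) (l : SeqPartition) : StrictAnti (seq r l) := by
  apply strictAnti_nat_of_succ_lt
  intro n
  have h := l.antitone (Nat.le_succ n)
  simp only [seq, Nat.succ_eq_add_one] at h ⊢
  push_cast
  omega

lemma aux_le {e e' : ℕ → ℤ} (he : StrictAnti e) (he' : StrictAnti e')
    (h : Set.range e' ⊆ Set.range e) (n : ℕ) : e' n ≤ e n := by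
  obtain ⟨m, hm⟩ := h (Set.mem_range_self n)
  have hu : ∀ k : Fin (n+1), ∃ i : ℕ, i ≤ m ∧ e i = e' k := by
    intro k
    obtain ⟨i, hi⟩ := h (Set.mem_range_self (k : ℕ))
    refine ⟨i, ?_, hi⟩
    by_contra hc
    push_neg at hc
    have h1 : e i < e m := he hc
    have h2 : e' n ≤ e' (k : ℕ) := he'.antitone (by omega)
    omega
  choose u hum hue using hu
  have hinj : Function.Injective (fun k : Fin (n+1) => (⟨u k, Nat.lt_succ_of_le (hum k)⟩ : Fin (m+1))) := by
    intro k k' hkk'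
    have h1 : u k = u k' := congrArg Fin.val hkk'
    have h2 : e' (k : ℕ) = e' (k' : ℕ) := by rw [← hue k, ← hue k', h1]
    exact Fin.ext (he'.injective h2)
  have hcard : n + 1 ≤ m + 1 := by
    simpa using Fintype.card_le_of_injective _ hinj
  calc e' n = e m := hm.symm
    _ ≤ e n := he.antitone (by omega)

lemma strictAnti_eq_of_range_eq {e e' : ℕ → ℤ} (he : StrictAnti e) (he' : StrictAnti e')
    (h : Set.range e = Set.range e') : e = e' :=
  funext fun n => le_antisymm (aux_le he' he h.subset n) (aux_le he he' h.symm.subset n)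

lemma beta_inj {r r' : ℤ} {l l' : SeqPartition} (h : beta r l = beta r' l') : r = r' ∧ l = l' := by
  have hseq : seq r l = seq r' l' := by
    apply strictAnti_eq_of_range_eq (seq_strictAnti r l) (seq_strictAnti r' l')
    rw [← beta_eq_range, ← beta_eq_range, h]
  obtain ⟨N, hN⟩ := l.eventually_zero
  obtain ⟨N', hN'⟩ := l'.eventually_zero
  have hr : r = r' := by
    have h1 := congrFun hseq (max N N')
    simp only [seq, hN _ (le_max_left N N'), hN' _ (le_max_right N N')] at h1
    omega
  subst hr
  have hf : l.f = l'.f := by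
    funext n
    have h1 := congrFun hseq n
    simp only [seq] at h1
    omega
  obtain ⟨f, a, ez⟩ := l
  obtain ⟨f', a', ez'⟩ := l'
  simp only at hf
  subst hf
  exact ⟨rfl, rfl⟩

lemma adm_beta (r : ℤ) (l : SeqPartition) : Adm (beta r l) := by
  obtain ⟨N, hN⟩ := l.eventually_zero
  constructor
  · refine ⟨r - N - 1, fun x hx => ?_⟩
    refine ⟨(r - x - 1).toNat, ?_⟩
    have hge : N ≤ (r - x - 1).toNat := by omega
    rw [hN _ hge]
    omega
  · refine ⟨(l.f 0 : ℤ) + r, ?_⟩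
    rintro x ⟨n, rfl⟩
    have := l.antitone (Nat.zero_le n)
    omega

lemma exists_beta_of_adm {B : Set ℤ} (hB : Adm B) : ∃ l r, beta r l = B := by
  obtain ⟨⟨a, ha⟩, ⟨b, hb⟩⟩ := hB
  have hgex : ∀ x : ℤ, ∃ g, (g ∈ B ∧ g < x) ∧ ∀ z, (z ∈ B ∧ z < x) → z ≤ g := by
    intro x
    obtain ⟨g, h1, h2⟩ := Int.exists_greatest_of_bdd (P := fun z => z ∈ B ∧ z < x)
      ⟨b, fun z hz => le_of_lt (hb z hz.1)⟩ ⟨min a x - 1, ha _ (by omega), by omega⟩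
    exact ⟨g, h1, h2⟩
  choose g hg1 hg2 using hgex
  set e : ℕ → ℤ := fun n => g^[n+1] b with he_def
  have he_succ : ∀ n, e (n+1) = g (e n) := by
    intro n
    simp only [he_def]
    rw [Function.iterate_succ_apply' g (n+1) b]
  have heB : ∀ n, e n ∈ B := by
    intro n
    have : e n = g (g^[n] b) := Function.iterate_succ_apply' g n b
    rw [this]; exact (hg1 _).1
  have hstep : ∀ n, e (n+1) < e n := fun n => by rw [he_succ]; exact (hg1 (e n)).2
  have hanti : StrictAnti e := strictAnti_nat_of_succ_lt hstep
  have hmax : ∀ x ∈ B, x ≤ e 0 := by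
    intro x hx
    have : e 0 = g b := Function.iterate_succ_apply' g 0 b
    rw [this]
    exact hg2 b x ⟨hx, hb x hx⟩
  have hnext : ∀ n, ∀ x ∈ B, x < e n → x ≤ e (n+1) := by
    intro n x hx hlt
    rw [he_succ]
    exact hg2 (e n) x ⟨hx, hlt⟩
  have hlin : ∀ n : ℕ, e n ≤ e 0 - n := by
    intro n
    induction n with
    | zero => simp
    | succ k ih => have := hstep k; push_cast; push_cast at ih; omega
  have hsurj : ∀ x ∈ B, ∃ n, e n = x := by
    intro x hx
    have hex : ∃ n, e n ≤ x := by
      refine ⟨(e 0 - x).toNat, ?_⟩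
      have h1 := hlin (e 0 - x).toNat
      have h2 := hmax x hx
      omega
    obtain ⟨n, hn1, hn2⟩ : ∃ n, e n ≤ x ∧ ∀ m, m < n → ¬ e m ≤ x :=
      ⟨Nat.find hex, Nat.find_spec hex, fun m hm => Nat.find_min hex hm⟩
    cases n with
    | zero => exact ⟨0, le_antisymm hn1 (hmax x hx)⟩
    | succ k =>
      have hk : x < e k := lt_of_not_ge (hn2 k (Nat.lt_succ_self k))
      exact ⟨k+1, le_antisymm hn1 (hnext k x hx hk)⟩
  have htail : ∀ n, e n < a → e (n+1) = e n - 1 := by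
    intro n h
    have h1 : e n - 1 ≤ e (n+1) := hnext n _ (ha _ (by omega)) (by omega)
    have h2 := hstep n
    omega
  set N : ℕ := (e 0 - a).toNat + 1 with hN_def
  have hNa : e N < a := by
    have := hlin N
    omega
  have hconst : ∀ n, N ≤ n → e n + n = e N + N := by
    intro n hn
    induction n, hn using Nat.le_induction with
    | base => rfl
    | succ n hn ih =>
      have hlt : e n < a := by
        have h1 : e n ≤ e N := hanti.antitone hn
        omega
      have h2 := htail n hlt
      push_cast
      push_cast at ih
      omega
  have hwstep : ∀ n : ℕ, e (n+1) + ((n:ℤ)+1) + 1 ≤ e n + n + 1 := by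
    intro n
    have := hstep n
    omega
  have hwanti : Antitone (fun n : ℕ => e n + (n : ℤ) + 1) := by
    apply antitone_nat_of_succ_le
    intro n
    have := hwstep n
    push_cast
    omega
  set r : ℤ := e N + N + 1 with hr_def
  have hw : ∀ n : ℕ, r ≤ e n + n + 1 := by
    intro n
    rcases le_total N n with h | h
    · have := hconst n h; omega
    · have := hwanti h
      simp only at this
      omega
  refine ⟨⟨fun n => (e n + n + 1 - r).toNat, ?_, ⟨N, ?_⟩⟩, r, ?_⟩
  · intro m n hmn
    have h1 := hwanti hmn
    simp only at h1 ⊢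
    omega
  · intro n hn
    have := hconst n hn
    omega
  · ext x
    simp only [beta, Set.mem_setOf_eq]
    constructor
    · rintro ⟨n, hx⟩
      have h1 := hw n
      rw [Int.toNat_of_nonneg (by omega)] at hx
      have : x = e n := by omega
      rw [this]; exact heB n
    · intro hx
      obtain ⟨n, rfl⟩ := hsurj x hx
      refine ⟨n, ?_⟩
      rw [Int.toNat_of_nonneg (by have := hw n; omega)]
      ring

lemma ofBeta_beta (r : ℤ) (l : SeqPartition) : ofBeta (beta r l) = l := by
  have h : ∃ l' : SeqPartition, ∃ r' : ℤ, beta r' l' = beta r l := ⟨l, r, rfl⟩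
  rw [ofBeta, dif_pos h]
  obtain ⟨r', hr'⟩ := h.choose_spec
  exact (beta_inj hr').2

lemma beta_ofBeta {B : Set ℤ} (hB : Adm B) : ∃ r, beta r (ofBeta B) = B := by
  have h : ∃ l : SeqPartition, ∃ r : ℤ, beta r l = B := exists_beta_of_adm hB
  rw [ofBeta, dif_pos h]
  exact h.choose_spec

end CQAux

namespace CQAux
open SeqPartition

def Aset (s : ℕ) (B : Set ℤ) (x : ℤ) : Set ℤ :=
  {b : ℤ | b ∈ B ∧ b ≡ x [ZMOD (s : ℤ)] ∧ x ≤ b}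

def Gset (s : ℕ) (B : Set ℤ) (x : ℤ) : Set ℤ :=
  {y : ℤ | y ∉ B ∧ y ≡ x [ZMOD (s : ℤ)] ∧ y < x}

lemma coreBeta_eq (s : ℕ) (B : Set ℤ) :
    coreBeta s B = {x | (Gset s B x).ncard < (Aset s B x).ncard} := rfl

lemma finite_Aset {s : ℕ} {B : Set ℤ} {b : ℤ} (hb : ∀ x ∈ B, x < b) (x : ℤ) :
    (Aset s B x).Finite :=
  Set.Finite.subset (Set.finite_Icc x b) (fun y hy => ⟨hy.2.2, le_of_lt (hb y hy.1)⟩)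

lemma finite_Gset {s : ℕ} {B : Set ℤ} {a : ℤ} (ha : ∀ x : ℤ, x < a → x ∈ B) (x : ℤ) :
    (Gset s B x).Finite :=
  Set.Finite.subset (Set.finite_Icc a x)
    (fun y hy => ⟨by by_contra h; exact hy.1 (ha y (by omega)), le_of_lt hy.2.2⟩)

lemma modeq_shift {s x b : ℤ} : (b ≡ x + s [ZMOD s]) ↔ (b ≡ x [ZMOD s]) := by
  unfold Int.ModEq
  rw [show (x + s) % s = x % s by simpa using Int.add_mul_emod_self_left (a:=x) (b:=s) (c:=1)]

lemma modeq_eq {s : ℕ} (hs : 0 < s) {b x : ℤ} (h : b ≡ x [ZMOD (s:ℤ)]) (h1 : x ≤ b)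
    (h2 : b < x + s) : b = x := by
  obtain ⟨k, hk⟩ := Int.ModEq.dvd h
  have hk0 : k = 0 := by
    rcases lt_trichotomy k 0 with h' | h' | h'
    · exfalso
      have : (s:ℤ) * k ≤ (s:ℤ) * (-1) :=
        mul_le_mul_of_nonneg_left (by omega) (by positivity)
      omega
    · exact h'
    · exfalso
      have : (s:ℤ) * 1 ≤ (s:ℤ) * k :=
        mul_le_mul_of_nonneg_left (by omega) (by positivity)
      omega
  rw [hk0, mul_zero] at hk
  omega

lemma Aset_step {s : ℕ} (hs : 0 < s) {B : Set ℤ} {b : ℤ} (hb : ∀ x ∈ B, x < b) (x : ℤ) :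
    (Aset s B x).ncard = (Aset s B (x + s)).ncard + (if x ∈ B then 1 else 0) := by
  by_cases hx : x ∈ B
  · rw [if_pos hx]
    have heq : Aset s B x = insert x (Aset s B (x + s)) := by
      ext c
      simp only [Aset, Set.mem_setOf_eq, Set.mem_insert_iff]
      constructor
      · rintro ⟨h1, h2, h3⟩
        rcases lt_or_ge c (x + s) with h4 | h4
        · exact Or.inl (modeq_eq hs h2 h3 h4)
        · exact Or.inr ⟨h1, modeq_shift.mpr h2, h4⟩
      · rintro (rfl | ⟨h1, h2, h3⟩)
        · exact ⟨hx, Int.ModEq.refl _, le_refl _⟩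
        · exact ⟨h1, modeq_shift.mp h2, by omega⟩
    rw [heq, Set.ncard_insert_of_notMem (fun h => by have := h.2.2; omega)
      (finite_Aset hb (x + s))]
  · rw [if_neg hx, add_zero]
    congr 1
    ext c
    simp only [Aset, Set.mem_setOf_eq]
    constructor
    · rintro ⟨h1, h2, h3⟩
      refine ⟨h1, modeq_shift.mpr h2, ?_⟩
      rcases lt_or_ge c (x + s) with h4 | h4
      · exact absurd (modeq_eq hs h2 h3 h4 ▸ h1) hx
      · exact h4
    · rintro ⟨h1, h2, h3⟩
      exact ⟨h1, modeq_shift.mp h2, by omega⟩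

lemma Gset_step {s : ℕ} (hs : 0 < s) {B : Set ℤ} {a : ℤ} (ha : ∀ x : ℤ, x < a → x ∈ B) (x : ℤ) :
    (Gset s B (x + s)).ncard = (Gset s B x).ncard + (if x ∈ B then 0 else 1) := by
  by_cases hx : x ∈ B
  · rw [if_pos hx, add_zero]
    congr 1
    ext c
    simp only [Gset, Set.mem_setOf_eq]
    constructor
    · rintro ⟨h1, h2, h3⟩
      have h2' := modeq_shift.mp h2
      refine ⟨h1, h2', ?_⟩
      rcases lt_or_ge c x with h4 | h4
      · exact h4
      · exact absurd (modeq_eq hs h2' h4 h3 ▸ hx) h1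
    · rintro ⟨h1, h2, h3⟩
      exact ⟨h1, modeq_shift.mpr h2, by omega⟩
  · rw [if_neg hx]
    have heq : Gset s B (x + s) = insert x (Gset s B x) := by
      ext c
      simp only [Gset, Set.mem_setOf_eq, Set.mem_insert_iff]
      constructor
      · rintro ⟨h1, h2, h3⟩
        have h2' := modeq_shift.mp h2
        rcases lt_or_ge c x with h4 | h4
        · exact Or.inr ⟨h1, h2', h4⟩
        · exact Or.inl (modeq_eq hs h2' h4 h3)
      · rintro (rfl | ⟨h1, h2, h3⟩)
        · exact ⟨hx, modeq_shift.mpr (Int.ModEq.refl _), by omega⟩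
        · exact ⟨h1, modeq_shift.mpr h2, by omega⟩
    rw [heq, Set.ncard_insert_of_notMem (fun h => by have := h.2.2; omega)
      (finite_Gset ha x)]

noncomputable def hfun (s : ℕ) (B : Set ℤ) (x : ℤ) : ℤ :=
  ((Aset s B x).ncard : ℤ) - ((Gset s B x).ncard : ℤ)

lemma hfun_step {s : ℕ} (hs : 0 < s) {B : Set ℤ} (hB : Adm B) (x : ℤ) :
    hfun s B (x + s) = hfun s B x - 1 := by
  obtain ⟨⟨a, ha⟩, ⟨b, hb⟩⟩ := hB
  have h1 := Aset_step hs hb x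
  have h2 := Gset_step hs ha x
  unfold hfun
  by_cases hx : x ∈ B <;> simp [hx] at h1 h2 <;> omega

lemma hfun_add_mul {s : ℕ} (hs : 0 < s) {B : Set ℤ} (hB : Adm B) (x : ℤ) (z : ℤ) :
    hfun s B (x + s * z) = hfun s B x - z := by
  induction z using Int.induction_on with
  | zero => simp
  | succ k ih =>
    have h1 := hfun_step hs hB (x + s * k)
    rw [show x + (s:ℤ) * ((k:ℤ) + 1) = x + s * k + s by ring, h1, ih]
    omega
  | pred k ih =>
    have h1 := hfun_step hs hB (x + s * (-(k:ℤ) - 1))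
    rw [show x + (s:ℤ) * (-(k:ℤ) - 1) + s = x + s * (-(k:ℤ)) by ring] at h1
    ring_nf at h1 ih ⊢
    omega

lemma mem_coreBeta_iff {s : ℕ} (B : Set ℤ) (x : ℤ) :
    x ∈ coreBeta s B ↔ 0 < hfun s B x := by
  rw [coreBeta_eq]
  simp only [Set.mem_setOf_eq, hfun]
  omega

lemma adm_coreBeta {s : ℕ} (hs : 0 < s) {B : Set ℤ} (hB : Adm B) : Adm (coreBeta s B) := by
  obtain ⟨⟨a, ha⟩, ⟨b, hb⟩⟩ := hB
  constructor
  · refine ⟨a, fun x hx => ?_⟩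
    rw [mem_coreBeta_iff]
    have hG : Gset s B x = ∅ := by
      rw [Set.eq_empty_iff_forall_notMem]
      rintro y ⟨h1, h2, h3⟩
      exact h1 (ha y (by omega))
    have hA : 0 < (Aset s B x).ncard := by
      rw [Set.ncard_pos (finite_Aset hb x)]
      exact ⟨x, ha x hx, Int.ModEq.refl x, le_refl x⟩
    unfold hfun
    rw [hG]
    simp only [Set.ncard_empty]
    omega
  · refine ⟨b, fun x hx => ?_⟩
    rw [mem_coreBeta_iff] at hx
    by_contra h
    push_neg at h
    have hA : Aset s B x = ∅ := by
      ext c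
      simp only [Aset, Set.mem_setOf_eq, Set.mem_empty_iff_false, iff_false, not_and]
      intro h1 h2 h3
      have := hb c h1
      omega
    unfold hfun at hx
    rw [hA] at hx
    simp only [Set.ncard_empty] at hx
    omega

end CQAux

namespace CQAux
open SeqPartition

lemma k_nonneg {s k : ℤ} (hs : 0 < s) (h : 0 ≤ s * k) : 0 ≤ k :=
  le_of_mul_le_mul_left (by simpa using h) hs

lemma k_nonpos {s k : ℤ} (hs : 0 < s) (h : s * k ≤ 0) : k ≤ 0 :=
  le_of_mul_le_mul_left (by simpa using h) hs

def Q (s : ℕ) (B : Set ℤ) (j : ℤ) : Set ℤ := {z : ℤ | j + (s : ℤ) * z ∈ B}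

lemma mem_iff_runner {s : ℕ} (hs : 0 < s) (B : Set ℤ) (x : ℤ) :
    x ∈ B ↔ (x / s) ∈ Q s B (x % s) := by
  simp only [Q, Set.mem_setOf_eq]
  rw [show x % (s:ℤ) + (s:ℤ) * (x / s) = x from by
    linarith [Int.mul_ediv_add_emod x (s:ℤ)]]

lemma injective_affine {s : ℕ} (hs : 0 < s) (j : ℤ) :
    Function.Injective (fun z : ℤ => j + (s:ℤ) * z) := by
  intro z1 z2 h
  simp only at h
  have h1 : (s:ℤ) * z1 = (s:ℤ) * z2 := by omega
  exact mul_left_cancel₀ (by positivity) h1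

lemma Aset_eq_image {s : ℕ} (hs : 0 < s) (B : Set ℤ) (j : ℤ) :
    Aset s B j = (fun z : ℤ => j + (s:ℤ) * z) '' (Q s B j ∩ Set.Ici 0) := by
  ext b
  simp only [Aset, Set.mem_setOf_eq, Set.mem_image, Set.mem_inter_iff, Q, Set.mem_Ici]
  constructor
  · rintro ⟨h1, h2, h3⟩
    obtain ⟨k, hk⟩ := Int.ModEq.dvd h2
    have hb' : b = j + (s:ℤ) * (-k) := by rw [mul_neg]; omega
    refine ⟨-k, ⟨?_, ?_⟩, hb'.symm⟩
    · rw [← hb']; exact h1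
    · have hk0 : k ≤ 0 := k_nonpos (s := (s:ℤ)) (by exact_mod_cast hs) (by omega)
      omega
  · rintro ⟨z, ⟨h1, h2⟩, rfl⟩
    refine ⟨h1, ?_, ?_⟩
    · show (j + (s:ℤ) * z) % s = j % s
      exact Int.add_mul_emod_self_left (a := j) (b := (s:ℤ)) (c := z)
    · have : 0 ≤ (s:ℤ) * z := mul_nonneg (by positivity) h2
      omega

lemma Gset_eq_image {s : ℕ} (hs : 0 < s) (B : Set ℤ) (j : ℤ) :
    Gset s B j = (fun z : ℤ => j + (s:ℤ) * z) '' ((Q s B j)ᶜ ∩ Set.Iio 0) := by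
  ext y
  simp only [Gset, Set.mem_setOf_eq, Set.mem_image, Set.mem_inter_iff, Set.mem_compl_iff, Q,
    Set.mem_Iio]
  constructor
  · rintro ⟨h1, h2, h3⟩
    obtain ⟨k, hk⟩ := Int.ModEq.dvd h2
    have hy' : y = j + (s:ℤ) * (-k) := by rw [mul_neg]; omega
    refine ⟨-k, ⟨?_, ?_⟩, hy'.symm⟩
    · rw [← hy']; exact h1
    · have hk0 : 0 ≤ k := k_nonneg (s := (s:ℤ)) (by exact_mod_cast hs) (by omega)
      have : k ≠ 0 := by rintro rfl; simp at hk; omega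
      omega
  · rintro ⟨z, ⟨h1, h2⟩, rfl⟩
    refine ⟨h1, ?_, ?_⟩
    · show (j + (s:ℤ) * z) % s = j % s
      exact Int.add_mul_emod_self_left (a := j) (b := (s:ℤ)) (c := z)
    · have : (s:ℤ) * z < 0 := mul_neg_of_pos_of_neg (by positivity) h2
      omega

noncomputable def charge (B : Set ℤ) : ℤ :=
  ((B ∩ Set.Ici 0).ncard : ℤ) - ((Bᶜ ∩ Set.Iio 0).ncard : ℤ)

lemma hfun_eq_charge_Q {s : ℕ} (hs : 0 < s) (B : Set ℤ) (j : ℤ) :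
    hfun s B j = charge (Q s B j) := by
  unfold hfun charge
  rw [Aset_eq_image hs B j, Gset_eq_image hs B j,
    Set.ncard_image_of_injective _ (injective_affine hs j),
    Set.ncard_image_of_injective _ (injective_affine hs j)]

lemma adm_Q {s : ℕ} (hs : 0 < s) {B : Set ℤ} (hB : Adm B) {j : ℤ} (hj0 : 0 ≤ j)
    (hjs : j < s) : Adm (Q s B j) := by
  obtain ⟨⟨a, ha⟩, ⟨b, hb⟩⟩ := hB
  constructor
  · refine ⟨min (a - s) 0, fun z hz => ?_⟩
    have hz0 : z ≤ 0 := by omega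
    have h1 : (s:ℤ) * z ≤ 1 * z := mul_le_mul_of_nonpos_right (by exact_mod_cast hs) hz0
    rw [one_mul] at h1
    exact ha _ (by omega)
  · refine ⟨max b 1, fun z hz => ?_⟩
    rcases le_or_gt z 0 with h | h
    · omega
    · have h1 : 1 * z ≤ (s:ℤ) * z := mul_le_mul_of_nonneg_right (by exact_mod_cast hs) (by omega)
      rw [one_mul] at h1
      have h2 := hb _ hz
      omega

lemma Aset_one (B : Set ℤ) (x : ℤ) : Aset 1 B x = B ∩ Set.Ici x := by
  ext b
  simp only [Aset, Set.mem_setOf_eq, Set.mem_inter_iff, Set.mem_Ici, Nat.cast_one,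
    Int.ModEq, Int.emod_one]
  tauto

lemma Gset_one (B : Set ℤ) (x : ℤ) : Gset 1 B x = Bᶜ ∩ Set.Iio x := by
  ext b
  simp only [Gset, Set.mem_setOf_eq, Set.mem_inter_iff, Set.mem_Iio, Set.mem_compl_iff,
    Nat.cast_one, Int.ModEq, Int.emod_one]
  tauto

lemma charge_eq_hfun_one {B : Set ℤ} (hB : Adm B) (x : ℤ) :
    hfun 1 B x = charge B - x := by
  have h1 := hfun_add_mul (s := 1) one_pos hB 0 x
  simp only [Nat.cast_one, one_mul, zero_add] at h1
  have h2 : hfun 1 B 0 = charge B := by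
    unfold hfun charge
    rw [Aset_one, Gset_one]
  rw [h1, h2]

lemma charge_beta (r : ℤ) (l : SeqPartition) : charge (beta r l) = r := by
  obtain ⟨N, hN⟩ := l.eventually_zero
  set x₀ : ℤ := -(N + 1) + r with hx₀
  have hB := adm_beta r l
  have hG : (beta r l)ᶜ ∩ Set.Iio x₀ = ∅ := by
    rw [Set.eq_empty_iff_forall_notMem]
    rintro y ⟨h1, h2⟩
    simp only [Set.mem_Iio] at h2
    apply h1
    refine ⟨(r - y - 1).toNat, ?_⟩
    have hge : N ≤ (r - y - 1).toNat := by omega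
    rw [hN _ hge]
    omega
  have hA : beta r l ∩ Set.Ici x₀ = seq r l '' Set.Iic N := by
    ext x
    rw [beta_eq_range]
    simp only [Set.mem_inter_iff, Set.mem_range, Set.mem_Ici, Set.mem_image, Set.mem_Iic]
    constructor
    · rintro ⟨⟨n, rfl⟩, h2⟩
      refine ⟨n, ?_, rfl⟩
      have hx₀' : x₀ = seq r l N := by simp [seq, hN N le_rfl, hx₀]
      rw [hx₀'] at h2
      exact (seq_strictAnti r l).le_iff_ge.mp h2
    · rintro ⟨n, hn, rfl⟩
      refine ⟨⟨n, rfl⟩, ?_⟩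
      have hx₀' : x₀ = seq r l N := by simp [seq, hN N le_rfl, hx₀]
      rw [hx₀']
      exact (seq_strictAnti r l).antitone hn
  have hcard : (beta r l ∩ Set.Ici x₀).ncard = N + 1 := by
    rw [hA, Set.ncard_image_of_injective _ (seq_strictAnti r l).injective]
    rw [show (Set.Iic N : Set ℕ) = ↑(Finset.Iic N) by simp]
    rw [Set.ncard_coe_finset]
    simp [Nat.card_Iic]
  have key : hfun 1 (beta r l) x₀ = charge (beta r l) - x₀ := charge_eq_hfun_one hB x₀
  unfold hfun at key
  rw [Aset_one, Gset_one, hG, hcard] at key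
  simp only [Set.ncard_empty] at key
  omega

lemma charge_Iio (c : ℤ) : charge (Set.Iio c) = c := by
  unfold charge
  have h1 : Set.Iio c ∩ Set.Ici 0 = ↑(Finset.Ico 0 c) := by
    ext x
    simp only [Finset.coe_Ico, Set.mem_inter_iff, Set.mem_Iio, Set.mem_Ici, Set.mem_Ico,
      Set.mem_compl_iff, not_lt]
    omega
  have h2 : (Set.Iio c)ᶜ ∩ Set.Iio 0 = ↑(Finset.Ico c 0) := by
    ext x
    simp only [Finset.coe_Ico, Set.mem_inter_iff, Set.mem_Iio, Set.mem_Ici, Set.mem_Ico,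
      Set.mem_compl_iff, not_lt]
  rw [h1, h2, Set.ncard_coe_finset, Set.ncard_coe_finset, Int.card_Ico, Int.card_Ico]
  omega

lemma Q_coreBeta {s : ℕ} (hs : 0 < s) {B : Set ℤ} (hB : Adm B) (j : ℤ) :
    Q s (coreBeta s B) j = Set.Iio (hfun s B j) := by
  ext z
  simp only [Q, Set.mem_setOf_eq, Set.mem_Iio]
  rw [mem_coreBeta_iff, hfun_add_mul hs hB j z]
  omega

lemma Iio_inj {a b : ℤ} (h : Set.Iio a = Set.Iio b) : a = b := by
  have h1 : a - 1 ∈ Set.Iio b := h ▸ (by simp : a - 1 ∈ Set.Iio a)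
  have h2 : b - 1 ∈ Set.Iio a := h.symm ▸ (by simp : b - 1 ∈ Set.Iio b)
  simp only [Set.mem_Iio] at h1 h2
  omega

end CQAux

namespace CQAux
open SeqPartition

lemma ncard_fiberwise {s : ℕ} (hs : 0 < s) {S : Set ℤ} (hS : S.Finite) :
    S.ncard = ∑ j ∈ Finset.Ico (0:ℤ) (s:ℤ), ({x ∈ S | x % (s:ℤ) = j}).ncard := by
  classical
  rw [Set.ncard_eq_toFinset_card S hS]
  rw [Finset.card_eq_sum_card_fiberwise (f := fun x : ℤ => x % (s:ℤ))
    (t := Finset.Ico (0:ℤ) (s:ℤ))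
    (fun x _ => by
      simp only [Finset.mem_coe, Finset.mem_Ico]
      exact ⟨Int.emod_nonneg x (by exact_mod_cast hs.ne'),
        Int.emod_lt_of_pos x (by exact_mod_cast hs)⟩)]
  apply Finset.sum_congr rfl
  intro j _
  rw [← Set.ncard_coe_finset]
  congr 1
  rw [Finset.coe_filter]
  ext x
  simp [hS.mem_toFinset]

lemma fiberA {s : ℕ} (hs : 0 < s) (B : Set ℤ) {j : ℤ} (hj0 : 0 ≤ j) (hjs : j < s) :
    {x ∈ B ∩ Set.Ici 0 | x % (s:ℤ) = j}
      = (fun z : ℤ => j + (s:ℤ) * z) '' (Q s B j ∩ Set.Ici 0) := by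
  have hsne : (s:ℤ) ≠ 0 := by exact_mod_cast hs.ne'
  ext x
  simp only [Set.mem_setOf_eq, Set.mem_inter_iff, Set.mem_Ici, Set.mem_image, Q]
  constructor
  · rintro ⟨⟨h1, h2⟩, h3⟩
    have hx : j + (s:ℤ) * (x / s) = x := by
      rw [← h3]; linarith [Int.mul_ediv_add_emod x (s:ℤ)]
    exact ⟨x / s, ⟨by rw [hx]; exact h1, Int.ediv_nonneg h2 (by exact_mod_cast hs.le)⟩, hx⟩
  · rintro ⟨z, ⟨h1, h2⟩, rfl⟩
    refine ⟨⟨h1, ?_⟩, ?_⟩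
    · have := mul_nonneg (show (0:ℤ) ≤ s by exact_mod_cast hs.le) h2
      omega
    · rw [Int.add_mul_emod_self_left (a := j) (b := (s:ℤ)) (c := z)]
      exact Int.emod_eq_of_lt hj0 hjs

lemma fiberG {s : ℕ} (hs : 0 < s) (B : Set ℤ) {j : ℤ} (hj0 : 0 ≤ j) (hjs : j < s) :
    {x ∈ Bᶜ ∩ Set.Iio 0 | x % (s:ℤ) = j}
      = (fun z : ℤ => j + (s:ℤ) * z) '' ((Q s B j)ᶜ ∩ Set.Iio 0) := by
  have hsne : (s:ℤ) ≠ 0 := by exact_mod_cast hs.ne'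
  ext x
  simp only [Set.mem_setOf_eq, Set.mem_inter_iff, Set.mem_Iio, Set.mem_image, Set.mem_compl_iff, Q]
  constructor
  · rintro ⟨⟨h1, h2⟩, h3⟩
    have hx : j + (s:ℤ) * (x / s) = x := by
      rw [← h3]; linarith [Int.mul_ediv_add_emod x (s:ℤ)]
    refine ⟨x / s, ⟨by rw [hx]; exact h1, ?_⟩, hx⟩
    by_contra h
    push_neg at h
    have := mul_nonneg (show (0:ℤ) ≤ s by exact_mod_cast hs.le) h
    omega
  · rintro ⟨z, ⟨h1, h2⟩, rfl⟩
    refine ⟨⟨h1, ?_⟩, ?_⟩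
    · have h3 : (s:ℤ) * z ≤ (s:ℤ) * (-1) :=
        mul_le_mul_of_nonneg_left (by omega) (by exact_mod_cast hs.le)
      have h4 : (s:ℤ) * (-1) = -(s:ℤ) := by ring
      omega
    · rw [Int.add_mul_emod_self_left (a := j) (b := (s:ℤ)) (c := z)]
      exact Int.emod_eq_of_lt hj0 hjs

lemma charge_sum {s : ℕ} (hs : 0 < s) {B : Set ℤ} (hB : Adm B) :
    charge B = ∑ j ∈ Finset.Ico (0:ℤ) (s:ℤ), charge (Q s B j) := by
  obtain ⟨⟨a, ha⟩, ⟨b, hb⟩⟩ := hB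
  have hfinA : (B ∩ Set.Ici 0).Finite :=
    Set.Finite.subset (Set.finite_Icc 0 b) (fun x hx => ⟨hx.2, le_of_lt (hb x hx.1)⟩)
  have hfinG : (Bᶜ ∩ Set.Iio 0).Finite :=
    Set.Finite.subset (Set.finite_Icc a 0)
      (fun x hx => ⟨by by_contra h; push_neg at h; exact hx.1 (ha x h), le_of_lt hx.2⟩)
  unfold charge
  rw [ncard_fiberwise hs hfinA, ncard_fiberwise hs hfinG]
  push_cast
  rw [← Finset.sum_sub_distrib]
  apply Finset.sum_congr rfl
  intro j hj
  rw [Finset.mem_Ico] at hj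
  rw [fiberA hs B hj.1 hj.2, fiberG hs B hj.1 hj.2,
    Set.ncard_image_of_injective _ (injective_affine hs j),
    Set.ncard_image_of_injective _ (injective_affine hs j)]

lemma set_eq_of_Q_eq {s : ℕ} (hs : 0 < s) {B B' : Set ℤ}
    (h : ∀ j : ℤ, 0 ≤ j → j < s → Q s B j = Q s B' j) : B = B' := by
  ext x
  rw [mem_iff_runner hs B x, mem_iff_runner hs B' x,
    h (x % s) (Int.emod_nonneg x (by exact_mod_cast hs.ne'))
      (Int.emod_lt_of_pos x (by exact_mod_cast hs))]

lemma val_coe_int {s : ℕ} (hs : 0 < s) (x : ℤ) : (((x : ZMod s)).val : ℤ) = x % s := by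
  haveI : NeZero s := ⟨hs.ne'⟩
  exact ZMod.val_intCast x

lemma coe_val_eq {s : ℕ} (hs : 0 < s) (j : ZMod s) : (((j.val : ℤ) : ZMod s)) = j := by
  haveI : NeZero s := ⟨hs.ne'⟩
  rw [Int.cast_natCast]
  simp [ZMod.natCast_val, ZMod.cast_id]

lemma val_lt' {s : ℕ} (hs : 0 < s) (j : ZMod s) : ((j.val : ℤ)) < s := by
  haveI : NeZero s := ⟨hs.ne'⟩
  exact_mod_cast ZMod.val_lt j

lemma charge_coreBeta {s : ℕ} (hs : 0 < s) {B : Set ℤ} (hB : Adm B) (hch : charge B = 0) :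
    charge (coreBeta s B) = 0 := by
  have h1 : charge (coreBeta s B) = ∑ j ∈ Finset.Ico (0:ℤ) (s:ℤ), charge (Q s B j) := by
    rw [charge_sum hs (adm_coreBeta hs hB)]
    apply Finset.sum_congr rfl
    intro j _
    rw [Q_coreBeta hs hB j, charge_Iio, hfun_eq_charge_Q hs B j]
  rw [h1, ← charge_sum hs hB, hch]

lemma beta_ofBeta_charge {B : Set ℤ} (hB : Adm B) : beta (charge B) (ofBeta B) = B := by
  obtain ⟨r, hr⟩ := beta_ofBeta hB
  have h : r = charge B := by rw [← charge_beta r (ofBeta B), hr]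
  rwa [h] at hr

lemma beta0_ofBeta {B : Set ℤ} (hB : Adm B) (hch : charge B = 0) : beta 0 (ofBeta B) = B := by
  have := beta_ofBeta_charge hB
  rwa [hch] at this

lemma quot_eq (s : ℕ) (l : SeqPartition) (j : ZMod s) :
    quot s l j = ofBeta (Q s (beta 0 l) ((j.val : ℤ))) := rfl

lemma core_eq (s : ℕ) (l : SeqPartition) : core s l = ofBeta (coreBeta s (beta 0 l)) := rfl

end CQAux

open CQAux in
open SeqPartition in
/-- A partition is determined by its `s`-core and `s`-quotient; moreover any `s`-core
and any `(ℤ/sℤ)`-tuple of partitions arise as the `s`-core and `s`-quotient of some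
partition. -/
theorem core_quot_determine (s : ℕ) (hs : 0 < s) :
    (∀ l m : SeqPartition, core s l = core s m → (∀ j : ZMod s, quot s l j = quot s m j) →
      l = m) ∧
    (∀ σ : SeqPartition, IsCore s σ → ∀ υ : ZMod s → SeqPartition,
      ∃ l : SeqPartition, core s l = σ ∧ ∀ j : ZMod s, quot s l j = υ j) := by
  constructor
  · intro l m hcore hquot
    set B : Set ℤ := beta 0 l with hBd
    set B' : Set ℤ := beta 0 m with hB'd
    have hB : Adm B := adm_beta 0 l
    have hB' : Adm B' := adm_beta 0 m
    have hchB : charge B = 0 := charge_beta 0 l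
    have hchB' : charge B' = 0 := charge_beta 0 m
    have hCB : beta 0 (ofBeta (coreBeta s B)) = coreBeta s B :=
      beta0_ofBeta (adm_coreBeta hs hB) (charge_coreBeta hs hB hchB)
    have hCB' : beta 0 (ofBeta (coreBeta s B')) = coreBeta s B' :=
      beta0_ofBeta (adm_coreBeta hs hB') (charge_coreBeta hs hB' hchB')
    have hcore' : ofBeta (coreBeta s B) = ofBeta (coreBeta s B') := hcore
    have hCC : coreBeta s B = coreBeta s B' := by
      rw [← hCB, ← hCB', hcore']
    have hfeq : ∀ j : ℤ, hfun s B j = hfun s B' j := by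
      intro j
      have h1 : Q s (coreBeta s B) j = Q s (coreBeta s B') j := by rw [hCC]
      rw [Q_coreBeta hs hB j, Q_coreBeta hs hB' j] at h1
      exact Iio_inj h1
    have hQ : ∀ j : ℤ, 0 ≤ j → j < s → Q s B j = Q s B' j := by
      intro j hj0 hjs
      have hq1 : beta (charge (Q s B j)) (ofBeta (Q s B j)) = Q s B j :=
        beta_ofBeta_charge (adm_Q hs hB hj0 hjs)
      have hq2 : beta (charge (Q s B' j)) (ofBeta (Q s B' j)) = Q s B' j :=
        beta_ofBeta_charge (adm_Q hs hB' hj0 hjs)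
      have hcv : charge (Q s B j) = charge (Q s B' j) := by
        rw [← hfun_eq_charge_Q hs B j, ← hfun_eq_charge_Q hs B' j]
        exact hfeq j
      have hofeq : ofBeta (Q s B j) = ofBeta (Q s B' j) := by
        have hq := hquot ((j : ZMod s))
        rw [quot_eq, quot_eq] at hq
        have hval : ((((j : ZMod s)).val : ℤ)) = j := by
          rw [val_coe_int hs j, Int.emod_eq_of_lt hj0 hjs]
        rwa [hval] at hq
      rw [← hq1, ← hq2, hcv, hofeq]
    have hBB' : B = B' := set_eq_of_Q_eq hs hQ
    exact (beta_inj (show beta 0 l = beta 0 m from hBB')).2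
  · intro σ hσ υ
    haveI : NeZero s := ⟨hs.ne'⟩
    set C : Set ℤ := beta 0 σ with hCd
    have hC : Adm C := adm_beta 0 σ
    have hchC : charge C = 0 := charge_beta 0 σ
    have hcore_eq : coreBeta s C = C := by
      have h1 : beta 0 (ofBeta (coreBeta s C)) = coreBeta s C :=
        beta0_ofBeta (adm_coreBeta hs hC) (charge_coreBeta hs hC hchC)
      have h2 : ofBeta (coreBeta s C) = σ := hσ
      rw [← h1, h2]
    set rr : ZMod s → ℤ := fun j => hfun s C ((j.val : ℤ)) with hrr
    set u : ZMod s → Set ℤ := fun j => beta (rr j) (υ j) with hu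
    set B : Set ℤ := {x : ℤ | x / (s:ℤ) ∈ u ((x : ZMod s))} with hBdef
    have hQu : ∀ j : ℤ, 0 ≤ j → j < s → Q s B j = u ((j : ZMod s)) := by
      intro j hj0 hjs
      ext z
      simp only [Q, Set.mem_setOf_eq, hBdef]
      have hdiv : (j + (s:ℤ) * z) / s = z := by
        rw [Int.add_mul_ediv_left j z (show (s:ℤ) ≠ 0 by exact_mod_cast hs.ne'),
          Int.ediv_eq_zero_of_lt hj0 hjs, zero_add]
      have hcast : (((j + (s:ℤ) * z : ℤ)) : ZMod s) = ((j : ZMod s)) := by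
        push_cast [ZMod.natCast_self]
        ring
      rw [hdiv, hcast]
    have hQu' : ∀ j : ZMod s, Q s B ((j.val : ℤ)) = u j := by
      intro j
      have h := hQu ((j.val : ℤ)) (by positivity) (val_lt' hs j)
      rwa [coe_val_eq hs j] at h
    have hsZ : (0:ℤ) < (s:ℤ) := by exact_mod_cast hs
    have hAdmB : Adm B := by
      constructor
      · have hall : ∀ j : ZMod s, ∃ aj : ℤ, ∀ x : ℤ, x < aj → x ∈ u j :=
          fun j => (adm_beta (rr j) (υ j)).1
        choose af haf using hall
        set A : ℤ := Finset.univ.inf' Finset.univ_nonempty af with hA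
        refine ⟨(s:ℤ) * (A - 1), fun x hx => ?_⟩
        have h1 : (s:ℤ) * (x / s) ≤ x := by
          linarith [Int.mul_ediv_add_emod x (s:ℤ), Int.emod_nonneg x hsZ.ne']
        have h2 : x / s < A - 1 := lt_of_mul_lt_mul_left (by omega) hsZ.le
        have h3 : A ≤ af ((x : ZMod s)) := Finset.inf'_le af (Finset.mem_univ _)
        show x / (s:ℤ) ∈ u ((x : ZMod s))
        exact haf _ _ (by omega)
      · have hall : ∀ j : ZMod s, ∃ bj : ℤ, ∀ x ∈ u j, x < bj :=
          fun j => (adm_beta (rr j) (υ j)).2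
        choose bf hbf using hall
        set M : ℤ := Finset.univ.sup' Finset.univ_nonempty bf with hM
        refine ⟨(s:ℤ) * M, fun x hx => ?_⟩
        have hx' : x / (s:ℤ) ∈ u ((x : ZMod s)) := hx
        have h1 := hbf _ _ hx'
        have h2 : bf ((x : ZMod s)) ≤ M := Finset.le_sup' bf (Finset.mem_univ _)
        have h3 : x ≤ (s:ℤ) * (x / s) + ((s:ℤ) - 1) := by
          linarith [Int.mul_ediv_add_emod x (s:ℤ), Int.emod_lt_of_pos x hsZ]
        have h4 : (s:ℤ) * (x / s) ≤ (s:ℤ) * (M - 1) :=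
          mul_le_mul_of_nonneg_left (by omega) hsZ.le
        have h5 : (s:ℤ) * (M - 1) = (s:ℤ) * M - (s:ℤ) := by ring
        omega
    have hfunB : ∀ j : ℤ, 0 ≤ j → j < s → hfun s B j = hfun s C j := by
      intro j hj0 hjs
      rw [hfun_eq_charge_Q hs B j, hQu j hj0 hjs]
      simp only [hu]
      rw [charge_beta]
      simp only [hrr]
      rw [val_coe_int hs j, Int.emod_eq_of_lt hj0 hjs]
    have hchB : charge B = 0 := by
      have h1 : charge B = ∑ j ∈ Finset.Ico (0:ℤ) (s:ℤ), charge (Q s C j) := by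
        rw [charge_sum hs hAdmB]
        apply Finset.sum_congr rfl
        intro j hj
        rw [Finset.mem_Ico] at hj
        rw [← hfun_eq_charge_Q hs C j, ← hfunB j hj.1 hj.2, hfun_eq_charge_Q hs B j]
      rw [h1, ← charge_sum hs hC, hchC]
    have hbeta0 : beta 0 (ofBeta B) = B := beta0_ofBeta hAdmB hchB
    refine ⟨ofBeta B, ?_, ?_⟩
    · show ofBeta (coreBeta s (beta 0 (ofBeta B))) = σ
      rw [hbeta0]
      have hcb : coreBeta s B = C := by
        apply set_eq_of_Q_eq hs
        intro j hj0 hjs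
        have hqc : Q s C j = Set.Iio (hfun s C j) := by
          conv_lhs => rw [← hcore_eq]
          exact Q_coreBeta hs hC j
        rw [Q_coreBeta hs hAdmB j, hqc, hfunB j hj0 hjs]
      rw [hcb, hCd]
      exact ofBeta_beta 0 σ
    · intro j
      rw [quot_eq, hbeta0, hQu' j]
      simp only [hu]
      exact ofBeta_beta (rr j) (υ j)
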